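/- (Feasibility of the compound-symmetric solution.) Consider the semidefinite program with data Ω = [[ v·P + μ̄²·11ᵀ, μ̄·1 ],[ μ̄·1ᵀ, 1 ]], where P = circ(ρ) is a symmetric positive semidefinite circulant matrix with ρ_0 = 1 and ρ_t = ρ_{(T−t) mod T}, v ≥ 0, μ̄ ∈ ℝ, ε ∈ (0,1). Suppose M = [[circ(m), m_T·1],[m_T·1ᵀ, m_{T+1}]] with m_t = m_{(T−t) mod T}, together with β, γ ∈ ℝ, satisfies: M ⪰ 0, β + (1/ε)·tr(Ω M) ≤ 0, and M − [[ (1/2)·I, −(1/2)·1 ],[ −(1/2)·1ᵀ, γT − β ]] ⪰ 0. Set s = (∑_{t=0}^{T−1} m_t) − 1/2 and define m'_0 = s/T + 1/2, m'_t = s/T for t = 1, …, T−1, and M' = [[circ(m'), m_T·1],[m_T·1ᵀ, m_{T+1}]]. Then (M', β, γ) satisfies the same three constraints: M' ⪰ 0, β + (1/ε)·tr(Ω M') ≤ 0, and M' − [[ (1/2)·I, −(1/2)·1 ],[ −(1/2)·1ᵀ, γT − β ]] ⪰ 0. -/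

import Mathlib

noncomputable section

/-- The circulant matrix `circ c` with entries `c ((j - i) mod T)`. -/
def circ (T : ℕ) (c : Fin T → ℝ) : Matrix (Fin T) (Fin T) ℝ :=
  Matrix.of fun i j => c (j - i)

/-- Bordered matrix `[[C, b·1], [b·1ᵀ, d]]`. -/
def border (T : ℕ) (C : Matrix (Fin T) (Fin T) ℝ) (b d : ℝ) :
    Matrix (Fin T ⊕ Unit) (Fin T ⊕ Unit) ℝ :=
  Matrix.fromBlocks C
    (Matrix.of fun (_ : Fin T) (_ : Unit) => b)
    (Matrix.of fun (_ : Unit) (_ : Fin T) => b)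
    (Matrix.of fun (_ : Unit) (_ : Unit) => d)

/-- The second-order moment matrix `Ω = [[v·P + μ̄²·11ᵀ, μ̄·1], [μ̄·1ᵀ, 1]]`. -/
def momentMatrix (T : ℕ) (v μbar : ℝ) (P : Matrix (Fin T) (Fin T) ℝ) :
    Matrix (Fin T ⊕ Unit) (Fin T ⊕ Unit) ℝ :=
  border T (v • P + μbar ^ 2 • Matrix.of fun (_ _ : Fin T) => (1 : ℝ)) μbar 1

/-- The matrix `[[(1/2)·I, -(1/2)·1], [-(1/2)·1ᵀ, γT - β]]` appearing in the second
semidefinite constraint. -/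
def constrMatrix (T : ℕ) (γ β : ℝ) : Matrix (Fin T ⊕ Unit) (Fin T ⊕ Unit) ℝ :=
  border T ((1 / 2 : ℝ) • (1 : Matrix (Fin T) (Fin T) ℝ)) (-(1 / 2)) (γ * T - β)

/-- The compound-symmetric averaging `m'` of `m`: with `s = (∑ t, m t) - 1/2`,
`m'_0 = s/T + 1/2` and `m'_t = s/T` for `t ≠ 0`. -/
def avg (T : ℕ) (m : Fin T → ℝ) : Fin T → ℝ := fun t =>
  if (t : ℕ) = 0 then ((∑ u : Fin T, m u) - 1 / 2) / T + 1 / 2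
  else ((∑ u : Fin T, m u) - 1 / 2) / T

open Matrix

/-- all-ones matrix -/
def allJ (T : ℕ) : Matrix (Fin T) (Fin T) ℝ := Matrix.of fun _ _ => 1

lemma sum_shift {T : ℕ} [NeZero T] (c : Fin T → ℝ) (i : Fin T) :
    ∑ j, c (j - i) = ∑ t, c t :=
  Fintype.sum_equiv (Equiv.subRight i) _ _ fun _ => rfl

lemma sum_shift' {T : ℕ} [NeZero T] (c : Fin T → ℝ) (i : Fin T) :
    ∑ j, c (i - j) = ∑ t, c t :=
  Fintype.sum_equiv (Equiv.subLeft i) _ _ fun _ => rfl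

lemma circ_mul_J {T : ℕ} [NeZero T] (c : Fin T → ℝ) :
    circ T c * allJ T = (∑ t, c t) • allJ T := by
  ext i j
  simp [Matrix.mul_apply, circ, allJ, sum_shift c i]

lemma J_mul_circ {T : ℕ} [NeZero T] (c : Fin T → ℝ) :
    allJ T * circ T c = (∑ t, c t) • allJ T := by
  ext i j
  simp [Matrix.mul_apply, circ, allJ, sum_shift' c j]

lemma J_mul_J {T : ℕ} : allJ T * allJ T = (T : ℝ) • allJ T := by
  ext i j
  simp [Matrix.mul_apply, allJ]

lemma J_herm {T : ℕ} : (allJ T)ᴴ = allJ T := by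
  ext i j; simp [allJ]

lemma circ_avg {T : ℕ} [NeZero T] (m : Fin T → ℝ) :
    circ T (avg T m) =
      (((∑ t, m t) - 1 / 2) / T) • allJ T + (1 / 2 : ℝ) • (1 : Matrix (Fin T) (Fin T) ℝ) := by
  have hv : ∀ t : Fin T, (t : ℕ) = 0 ↔ t = 0 := fun t => by
    rw [Fin.ext_iff, Fin.val_zero]
  ext i j
  by_cases h : i = j
  · subst h
    simp [circ, avg, allJ, Matrix.one_apply, hv]
  · have h2 : (j - i : Fin T) ≠ 0 := sub_ne_zero.mpr (Ne.symm h)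
    simp [circ, avg, allJ, Matrix.one_apply, h, hv, h2]

lemma sum_avg {T : ℕ} [NeZero T] (hT : (T:ℝ) ≠ 0) (m : Fin T → ℝ) :
    ∑ t, avg T m t = ∑ t, m t := by
  have h : ∀ t : Fin T, avg T m t =
      ((∑ u, m u) - 1 / 2) / T + if t = (0 : Fin T) then (1/2 : ℝ) else 0 := by
    intro t
    have hv : (t : ℕ) = 0 ↔ t = 0 := by rw [Fin.ext_iff, Fin.val_zero]
    simp only [avg, hv]
    split <;> simp
  rw [Finset.sum_congr rfl fun t _ => h t, Finset.sum_add_distrib, Finset.sum_const,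
    Finset.sum_ite_eq' Finset.univ (0 : Fin T) (fun _ => (1/2:ℝ))]
  simp [Finset.card_univ, nsmul_eq_mul]
  field_simp
  ring

lemma trace_nonneg_psd {n : Type*} [Fintype n] {W : Matrix n n ℝ} (hW : W.PosSemidef) :
    0 ≤ W.trace := by
  classical
  rw [Matrix.trace]
  refine Finset.sum_nonneg fun i _ => ?_
  have := hW.dotProduct_mulVec_nonneg (Pi.single i 1)
  simpa [Matrix.mulVec_single, Matrix.diag] using this

open scoped MatrixOrder in
lemma trace_mul_psd {n : Type*} [Fintype n] [DecidableEq n] {A B : Matrix n n ℝ}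
    (hA : A.PosSemidef) (hB : B.PosSemidef) : 0 ≤ (A * B).trace := by
  have h1 : ((CFC.sqrt A)ᴴ * B * CFC.sqrt A).PosSemidef := hB.conjTranspose_mul_mul_same (CFC.sqrt A)
  have h2 : (CFC.sqrt A)ᴴ = CFC.sqrt A := (CFC.sqrt_nonneg A).posSemidef.isHermitian
  have h3 := trace_nonneg_psd h1
  rw [h2] at h3
  calc (0:ℝ) ≤ (CFC.sqrt A * B * CFC.sqrt A).trace := h3
    _ = (CFC.sqrt A * CFC.sqrt A * B).trace := by rw [Matrix.trace_mul_cycle]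
    _ = (A * B).trace := by rw [CFC.sqrt_mul_sqrt_self A hA.nonneg]

lemma border_sub {T : ℕ} (C C' : Matrix (Fin T) (Fin T) ℝ) (b b' d d' : ℝ) :
    border T C b d - border T C' b' d' = border T (C - C') (b - b') (d - d') := by
  ext (i | i) (j | j) <;> simp [border]

lemma border_add {T : ℕ} (C C' : Matrix (Fin T) (Fin T) ℝ) (b b' d d' : ℝ) :
    border T C b d + border T C' b' d' = border T (C + C') (b + b') (d + d') := by
  ext (i | i) (j | j) <;> simp [border]

lemma border_herm {T : ℕ} (C : Matrix (Fin T) (Fin T) ℝ) (hC : Cᵀ = C) (b d : ℝ) :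
    (border T C b d)ᴴ = border T C b d := by
  have hCij : ∀ i j, C j i = C i j := fun i j => congrFun (congrFun hC i) j
  ext (i | i) (j | j) <;> simp [border, Matrix.conjTranspose_apply, hCij]

lemma border_conj {T : ℕ} [NeZero T] (C : Matrix (Fin T) (Fin T) ℝ) (b d : ℝ) :
    border T ((T:ℝ)⁻¹ • allJ T) 0 1 * border T C b d * border T ((T:ℝ)⁻¹ • allJ T) 0 1
      = border T (((T:ℝ)^2)⁻¹ • (allJ T * C * allJ T)) b d := by
  have hT0 : (T:ℝ) ≠ 0 := Nat.cast_ne_zero.mpr (NeZero.ne T)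
  ext (i | i) (j | j) <;>
    simp [border, Matrix.mul_apply, Fintype.sum_sum_type, allJ, Finset.mul_sum,
      Finset.sum_mul, Finset.card_univ]
  · refine Finset.sum_congr rfl fun x _ => Finset.sum_congr rfl fun y _ => ?_
    ring
  · rw [← mul_assoc, mul_inv_cancel₀ hT0, one_mul]
  · rw [mul_comm b ((T:ℝ)⁻¹), ← mul_assoc, mul_inv_cancel₀ hT0, one_mul]

lemma border_trace_mul {T : ℕ} (A B : Matrix (Fin T) (Fin T) ℝ) (b b' d d' : ℝ) :
    (border T A b d * border T B b' d').trace
      = (A * B).trace + 2 * T * (b * b') + d * d' := by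
  simp [Matrix.trace, Matrix.diag, Fintype.sum_sum_type, border, Matrix.mul_apply,
    Finset.sum_add_distrib, Finset.card_univ, nsmul_eq_mul]
  ring

lemma G_conj {T : ℕ} (K : Matrix (Fin T) (Fin T) ℝ) :
    (Matrix.of fun (i : Fin T) (p : Fin T ⊕ Unit) => if p = Sum.inl i then (1:ℝ) else 0)ᴴ * K *
      (Matrix.of fun (i : Fin T) (p : Fin T ⊕ Unit) => if p = Sum.inl i then (1:ℝ) else 0)
      = border T K 0 0 := by
  ext (i | i) (j | j) <;>
    simp [border, Matrix.mul_apply, Matrix.conjTranspose_apply]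

/-- Feasibility of the compound-symmetric solution: if the bordered circulant
`M = [[circ m, mT·1], [mT·1ᵀ, mT1]]` together with `β, γ` satisfies the three SDP
constraints (with data `Ω` built from a symmetric positive semidefinite circulant
autocorrelation matrix `P = circ ρ` with unit diagonal, `v ≥ 0`, `ε ∈ (0,1)`), then
so does `M' = [[circ m', mT·1], [mT·1ᵀ, mT1]]`, where `m'` is the
compound-symmetric averaging of `m`. -/
theorem compound_symmetric_feasibility (T : ℕ) (hT : 1 ≤ T) (ε : ℝ)
    (hε : ε ∈ Set.Ioo (0 : ℝ) 1) (ρ : Fin T → ℝ) (hρ0 : ρ ⟨0, hT⟩ = 1)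
    (hρ : ∀ t : Fin T, ρ t = ρ (-t)) (hP : (circ T ρ).PosSemidef)
    (v μbar : ℝ) (hv : 0 ≤ v)
    (m : Fin T → ℝ) (hm : ∀ t : Fin T, m t = m (-t)) (mT mT1 β γ : ℝ)
    (hpsd : (border T (circ T m) mT mT1).PosSemidef)
    (htr : β + (1 / ε) *
      ((momentMatrix T v μbar (circ T ρ)) * (border T (circ T m) mT mT1)).trace ≤ 0)
    (hpsd2 : ((border T (circ T m) mT mT1) - constrMatrix T γ β).PosSemidef) :
    (border T (circ T (avg T m)) mT mT1).PosSemidef ∧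
    β + (1 / ε) *
      ((momentMatrix T v μbar (circ T ρ)) * (border T (circ T (avg T m)) mT mT1)).trace ≤ 0 ∧
    ((border T (circ T (avg T m)) mT mT1) - constrMatrix T γ β).PosSemidef := by
  haveI : NeZero T := ⟨by omega⟩
  have hT0 : (T : ℝ) ≠ 0 := Nat.cast_ne_zero.mpr (by omega)
  obtain ⟨hε0, hε1⟩ := hε
  -- abbreviations (scalars)
  have hJt : (allJ T)ᵀ = allJ T := by ext i j; simp [allJ]
  have hJJ : allJ T * allJ T = (T : ℝ) • allJ T := J_mul_J
  have hJC : allJ T * circ T m = (∑ t, m t) • allJ T := J_mul_circ m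
  have hCJ : circ T m * allJ T = (∑ t, m t) • allJ T := circ_mul_J m
  have hcavg : circ T (avg T m) =
      (((∑ t, m t) - 1 / 2) / T) • allJ T + (1 / 2 : ℝ) • 1 := circ_avg m
  have hRH : (border T ((T:ℝ)⁻¹ • allJ T) 0 1)ᴴ = border T ((T:ℝ)⁻¹ • allJ T) 0 1 := by
    refine border_herm _ ?_ _ _
    rw [Matrix.transpose_smul, hJt]
  -- the projection Q
  have hJ1 : allJ T * ((1/2:ℝ) • (1 : Matrix (Fin T) (Fin T) ℝ)) = (1/2:ℝ) • allJ T := by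
    rw [Matrix.mul_smul, mul_one]
  have h1J : ((1/2:ℝ) • (1 : Matrix (Fin T) (Fin T) ℝ)) * allJ T = (1/2:ℝ) • allJ T := by
    rw [Matrix.smul_mul, one_mul]
  have hJQ : allJ T * (1 - (T:ℝ)⁻¹ • allJ T) = 0 := by
    rw [mul_sub, mul_one, Matrix.mul_smul, hJJ, smul_smul, inv_mul_cancel₀ hT0, one_smul,
      sub_self]
  have hQQ : (1 - (T:ℝ)⁻¹ • allJ T) * (1 - (T:ℝ)⁻¹ • allJ T) = 1 - (T:ℝ)⁻¹ • allJ T := by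
    rw [sub_mul, one_mul, Matrix.smul_mul, hJQ, smul_zero, sub_zero]
  have hQH : (1 - (T:ℝ)⁻¹ • allJ T)ᴴ = 1 - (T:ℝ)⁻¹ • allJ T := by
    rw [Matrix.conjTranspose_sub, Matrix.conjTranspose_one, Matrix.conjTranspose_smul,
      J_herm, star_trivial]
  have hQpsd : (1 - (T:ℝ)⁻¹ • allJ T).PosSemidef := by
    have h := Matrix.posSemidef_conjTranspose_mul_self (1 - (T:ℝ)⁻¹ • allJ T)
    rwa [hQH, hQQ] at h
  have hKpsd : ((1/2:ℝ) • (1 - (T:ℝ)⁻¹ • allJ T)).PosSemidef := by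
    exact hQpsd.smul (by norm_num)
  have hGpsd : (border T ((1/2:ℝ) • (1 - (T:ℝ)⁻¹ • allJ T)) 0 0).PosSemidef := by
    have h := hKpsd.conjTranspose_mul_mul_same
      (Matrix.of fun (i : Fin T) (p : Fin T ⊕ Unit) => if p = Sum.inl i then (1:ℝ) else 0)
    rwa [G_conj] at h
  -- Part 1
  have hJCJ : allJ T * circ T m * allJ T = ((∑ t, m t) * T) • allJ T := by
    rw [hJC, Matrix.smul_mul, hJJ, smul_smul]
  have h1eq : border T (circ T (avg T m)) mT mT1
      = border T ((T:ℝ)⁻¹ • allJ T) 0 1 * border T (circ T m) mT mT1 *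
          border T ((T:ℝ)⁻¹ • allJ T) 0 1
        + border T ((1/2:ℝ) • (1 - (T:ℝ)⁻¹ • allJ T)) 0 0 := by
    have htop : ((T:ℝ)^2)⁻¹ • (((∑ t, m t) * (T:ℝ)) • allJ T) + (1/2:ℝ) • (1 - (T:ℝ)⁻¹ • allJ T)
        = (((∑ t, m t) - 1/2)/(T:ℝ)) • allJ T + (1/2:ℝ) • 1 := by
      rw [smul_smul, smul_sub, smul_smul]
      match_scalars <;> field_simp <;> ring
    rw [border_conj, border_add, add_zero, add_zero, hJCJ, htop, hcavg]
  have part1 : (border T (circ T (avg T m)) mT mT1).PosSemidef := by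
    rw [h1eq]
    have h := hpsd.conjTranspose_mul_mul_same (border T ((T:ℝ)⁻¹ • allJ T) 0 1)
    rw [hRH] at h
    exact h.add hGpsd
  -- Part 3
  have e1 : constrMatrix T γ β =
      border T ((1/2:ℝ) • 1) (-(1/2)) (γ * T - β) := rfl
  have hJCn : allJ T * (circ T m - (1/2:ℝ) • 1) = ((∑ t, m t) - 1/2) • allJ T := by
    rw [mul_sub, hJC, hJ1, ← sub_smul]
  have hCnJ : (circ T m - (1/2:ℝ) • 1) * allJ T = ((∑ t, m t) - 1/2) • allJ T := by
    rw [sub_mul, hCJ, h1J, ← sub_smul]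
  have hJCnJ : allJ T * (circ T m - (1/2:ℝ) • 1) * allJ T
      = (((∑ t, m t) - 1/2) * T) • allJ T := by
    rw [hJCn, Matrix.smul_mul, hJJ, smul_smul]
  have h3sub : border T (circ T m) mT mT1 - constrMatrix T γ β
      = border T (circ T m - (1/2:ℝ) • 1) (mT - -(1/2)) (mT1 - (γ * T - β)) := by
    rw [e1, border_sub]
  have h3sub' : border T (circ T (avg T m)) mT mT1 - constrMatrix T γ β
      = border T ((((∑ t, m t) - 1/2) / T) • allJ T) (mT - -(1/2)) (mT1 - (γ * T - β)) := by
    rw [e1, border_sub, hcavg, add_sub_cancel_right]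
  have part3 : ((border T (circ T (avg T m)) mT mT1) - constrMatrix T γ β).PosSemidef := by
    have h := hpsd2.conjTranspose_mul_mul_same (border T ((T:ℝ)⁻¹ • allJ T) 0 1)
    rw [hRH, h3sub, border_conj, hJCnJ, smul_smul] at h
    rw [h3sub']
    convert h using 3
    field_simp
  -- Part 2
  have hCnpsd : (circ T m - (1/2:ℝ) • 1 : Matrix (Fin T) (Fin T) ℝ).PosSemidef := by
    have h := hpsd2.submatrix Sum.inl
    exact h
  have hQCn : (1 - (T:ℝ)⁻¹ • allJ T) * (circ T m - (1/2:ℝ) • 1)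
      = (circ T m - (1/2:ℝ) • 1) - ((((∑ t, m t) - 1/2) / T)) • allJ T := by
    rw [sub_mul, one_mul, Matrix.smul_mul, hJCn, smul_smul, ← div_eq_inv_mul]
  have hCnQ : (circ T m - (1/2:ℝ) • 1) * (1 - (T:ℝ)⁻¹ • allJ T)
      = (circ T m - (1/2:ℝ) • 1) - ((((∑ t, m t) - 1/2) / T)) • allJ T := by
    rw [mul_sub, mul_one, Matrix.mul_smul, hCnJ, smul_smul, ← div_eq_inv_mul]
  have hQCnQ : (1 - (T:ℝ)⁻¹ • allJ T) * (circ T m - (1/2:ℝ) • 1) * (1 - (T:ℝ)⁻¹ • allJ T)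
      = (circ T m - (1/2:ℝ) • 1) - ((((∑ t, m t) - 1/2) / T)) • allJ T := by
    rw [hQCn, sub_mul, hCnQ, Matrix.smul_mul, hJQ, smul_zero, sub_zero]
  have hDeq : circ T m - circ T (avg T m)
      = (circ T m - (1/2:ℝ) • 1) - ((((∑ t, m t) - 1/2) / T)) • allJ T := by
    rw [hcavg]; abel
  have hDpsd : (circ T m - circ T (avg T m)).PosSemidef := by
    have h := hCnpsd.conjTranspose_mul_mul_same (1 - (T:ℝ)⁻¹ • allJ T)
    rw [hQH, hQCnQ] at h
    rwa [hDeq]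
  have hJavg : allJ T * circ T (avg T m) = (∑ t, m t) • allJ T := by
    rw [J_mul_circ, sum_avg hT0]
  have hJD : allJ T * (circ T m - circ T (avg T m)) = 0 := by
    rw [mul_sub, hJC, hJavg, sub_self]
  have hmmM : momentMatrix T v μbar (circ T ρ)
      = border T (v • circ T ρ + μbar^2 • allJ T) μbar 1 := rfl
  have hdiff : ((v • circ T ρ + μbar^2 • allJ T) * circ T m).trace
      - ((v • circ T ρ + μbar^2 • allJ T) * circ T (avg T m)).trace
      = v * ((circ T ρ) * (circ T m - circ T (avg T m))).trace := by
    rw [← Matrix.trace_sub, ← Matrix.mul_sub, add_mul, Matrix.smul_mul, Matrix.smul_mul,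
      hJD, smul_zero, add_zero, Matrix.trace_smul, smul_eq_mul]
  have hPD : 0 ≤ ((circ T ρ) * (circ T m - circ T (avg T m))).trace :=
    trace_mul_psd hP hDpsd
  have hle : (momentMatrix T v μbar (circ T ρ) * border T (circ T (avg T m)) mT mT1).trace
      ≤ (momentMatrix T v μbar (circ T ρ) * border T (circ T m) mT mT1).trace := by
    rw [hmmM, border_trace_mul, border_trace_mul]
    have := mul_nonneg hv hPD
    linarith
  have hεpos : 0 < 1 / ε := by positivity
  refine ⟨part1, ?_, part3⟩
  have h2 := mul_le_mul_of_nonneg_left hle (le_of_lt hεpos)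
  linarith
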